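/- For d ≥ 3, and finite subsets A, B ⊆ Z^d, Cap(A ∪ B) ≤ Cap(A) + Cap(B) − χ₀(A,B), where χ₀(A,B) := Σ_{x ∈ A \ B} Σ_{y ∈ B} P_x(H_{A∪B}^+ = ∞) G(y−x) P_y(H_B^+ = ∞). -/

import Mathlib

open Filter Finset MeasureTheory
open scoped symmDiff ENNReal

namespace SRW

/-- Vertices of `ℤ^d`. -/
abbrev V (d : ℕ) : Type := Fin d → ℤ

/-- The set of nearest-neighbor steps (the `2d` unit vectors `±e_i`) in `ℤ^d`. -/
def steps (d : ℕ) : Finset (V d) :=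
  (Finset.univ : Finset (Fin d × Bool)).image
    (fun p j => if j = p.1 then (if p.2 then 1 else -1) else 0)

/-- Position at time `k` of the walk started at `x` with step sequence `s`. -/
def pos {d : ℕ} (x : V d) (s : ℕ → V d) (k : ℕ) : V d :=
  x + ∑ i ∈ Finset.range k, s i

open Classical in
/-- Probability, for the simple random walk, of an event depending on the
first `n` steps (steps beyond `n` are set to `0`): each of the `(2d)^n`
admissible step sequences has equal probability. -/
noncomputable def probN (d n : ℕ) (P : (ℕ → V d) → Prop) : ℝ :=
  (((Fintype.piFinset fun _ : Fin n => steps d).filter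
      (fun s => P fun i => if h : i < n then s ⟨i, h⟩ else 0)).card : ℝ) / ((2 * d : ℕ) : ℝ) ^ n

/-- Expectation of a functional of the first `n` steps of the walk. -/
noncomputable def expN (d n : ℕ) (f : (ℕ → V d) → ℝ) : ℝ :=
  (∑ s ∈ Fintype.piFinset fun _ : Fin n => steps d,
      f fun i => if h : i < n then s ⟨i, h⟩ else 0) / ((2 * d : ℕ) : ℝ) ^ n

/-- Escape probability `P_x(H_A^+ = ∞)`: the walk started at `x` never
hits `A` at a positive time (decreasing limit of the finite-horizon events). -/
noncomputable def esc (d : ℕ) (A : Set (V d)) (x : V d) : ℝ :=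
  ⨅ n : ℕ, probN d n (fun s => ∀ k, 1 ≤ k → k ≤ n → pos x s k ∉ A)

/-- Newtonian capacity `Cap(A) = Σ_{x∈A} P_x(H_A^+ = ∞)`. -/
noncomputable def cap {d : ℕ} (A : Finset (V d)) : ℝ :=
  ∑ x ∈ A, esc d (↑A) x

/-- Green's function `G(z) = Σ_n P_0(S_n = z)`. -/
noncomputable def G (d : ℕ) (z : V d) : ℝ :=
  ∑' n : ℕ, probN d n (fun s => pos 0 s n = z)

/-- Truncated Green's function `G_T(z) = Σ_{n≤T} P_0(S_n = z)`. -/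
noncomputable def GT (d T : ℕ) (z : V d) : ℝ :=
  ∑ n ∈ Finset.range (T + 1), probN d n (fun s => pos 0 s n = z)

/-- Convolution `(G ⋆ G_T)(x) = Σ_y G(x-y) G_T(y)`. -/
noncomputable def GconvGT (d T : ℕ) (x : V d) : ℝ :=
  ∑' y : V d, G d (x - y) * GT d T y

/-- Euclidean norm on `ℤ^d`. -/
noncomputable def nrm {d : ℕ} (x : V d) : ℝ :=
  Real.sqrt (∑ i, ((x i : ℝ)) ^ 2)

/-- The range `{S_k : k ∈ I}` of the walk started at `x` over the set of times `I`. -/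
noncomputable def rangeOn {d : ℕ} (x : V d) (s : ℕ → V d) (I : Finset ℕ) : Finset (V d) :=
  I.image (pos x s)

/-- Probability that the walk started at `z` hits both `A` and `B` in finite time
(increasing limit of the finite-horizon probabilities). -/
noncomputable def hitBothProb (d : ℕ) (A B : Finset (V d)) (z : V d) : ℝ :=
  ⨆ n : ℕ, probN d n (fun s => (∃ k ≤ n, pos z s k ∈ A) ∧ (∃ k ≤ n, pos z s k ∈ B))

/-- The discrete cube `Q(x,r) = [x - r/2, x + r/2)^d ∩ ℤ^d`. -/
def cube {d : ℕ} (x : V d) (r : ℝ) : Set (V d) :=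
  {y | ∀ i, (x i : ℝ) - r / 2 ≤ (y i : ℝ) ∧ (y i : ℝ) < (x i : ℝ) + r / 2}

/-- The corrector `ξ_n(T)`. -/
noncomputable def xi (d n T : ℕ) (s : ℕ → V d) : ℝ :=
  ∑ k ∈ Finset.range (n + 1), ∑ x ∈ rangeOn 0 s (Finset.Icc 0 k),
    esc d (↑(rangeOn 0 s (Finset.Icc 0 k))) x * (GconvGT d T (x - pos 0 s k) / T)

/-- The capacity cross-term `χ_C(A,B) = Cap(A) + Cap(B) - Cap(A ∪ B)`. -/
noncomputable def chiC {d : ℕ} (A B : Finset (V d)) : ℝ := cap A + cap B - cap (A ∪ B)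

open Classical in
/-- Conditional expectation, given the first `m` steps (equal to those of `s`),
of a functional of the first `n` steps. -/
noncomputable def condExpN (d n m : ℕ) (f : (ℕ → V d) → ℝ) (s : ℕ → V d) : ℝ :=
  expN d n (fun s' => if ∀ i < m, s' i = s i then f s' else 0) * ((2 * d : ℕ) : ℝ) ^ m

/-- The compensator `ξ_n^*(T)`. -/
noncomputable def xiStar (d n T : ℕ) (s : ℕ → V d) : ℝ :=
  (1 / (T : ℝ)) * ∑ j ∈ Finset.range T, ∑ l ∈ Finset.Icc 1 (n / T - 1),
    condExpN d (n + T) (j + l * T)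
      (fun s' => chiC (rangeOn 0 s' (Finset.Icc j (j + l * T)))
        (rangeOn 0 s' (Finset.Icc (j + l * T) (j + (l + 1) * T)))) s

/-- `E[Cap(R_n)]`, the expected capacity of the range up to time `n`. -/
noncomputable def expCapRange (d n : ℕ) : ℝ :=
  expN d n (fun s => cap (rangeOn 0 s (Finset.Icc 0 n)))

/-- The maximal capacity `c_n` of the range of a nearest-neighbor path with `n` steps. -/
noncomputable def maxPathCap (d n : ℕ) : ℝ :=
  sSup {y : ℝ | ∃ (x : V d) (s : ℕ → V d), (∀ i, s i ∈ steps d) ∧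
    y = cap (rangeOn x s (Finset.Icc 0 n))}

/-- `Γ(A,Λ) = Σ_{x∈A} Σ_{y∈Λ} G(y-x) P_y(H_Λ^+ = ∞)`. -/
noncomputable def GamFin (d : ℕ) (A : Finset (V d)) (Λ : Set (V d)) : ℝ :=
  ∑ x ∈ A, ∑' y : Λ, G d ((y : V d) - x) * esc d Λ (y : V d)

/-- `P(Γ(R̃_∞, Λ) > t)`, as the increasing limit of the finite-horizon probabilities. -/
noncomputable def PGam (d : ℕ) (Λ : Set (V d)) (t : ℝ) : ℝ :=
  ⨆ N : ℕ, probN d N (fun s => t < GamFin d (rangeOn 0 s (Finset.Icc 0 N)) Λ)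

/-- `E_x[Γ(R̃_∞, Λ)]`, as the increasing limit of the finite-horizon expectations. -/
noncomputable def EGam (d : ℕ) (x : V d) (Λ : Set (V d)) : ℝ :=
  ⨆ N : ℕ, expN d N (fun s => GamFin d (rangeOn x s (Finset.Icc 0 N)) Λ)

/-- The law of the first `n` steps of two independent simple random walks:
uniform measure on pairs of admissible step sequences of length `n`. -/
noncomputable def pairLevel (d n : ℕ) : Measure ((Fin n → V d) × (Fin n → V d)) :=
  (((2 * d : ℕ) : ℝ≥0∞) ^ (2 * n))⁻¹ •
    ∑ a ∈ Fintype.piFinset fun _ : Fin n => steps d,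
      ∑ b ∈ Fintype.piFinset fun _ : Fin n => steps d, Measure.dirac (a, b)

open Classical in
/-- `Γ(R̃_∞, R_∞) = Σ_{x ∈ R̃_∞} Σ_{y ∈ R_∞} G(y-x) P_y(H_{R_∞}^+ = ∞)` for
two (step sequences of) walks, with values in `ℝ≥0∞`. -/
noncomputable def gammaInf (d : ℕ) (sA sB : ℕ → V d) : ℝ≥0∞ :=
  ∑' x : V d, ∑' y : V d,
    if x ∈ Set.range (pos (0 : V d) sA) ∧ y ∈ Set.range (pos (0 : V d) sB) then
      ENNReal.ofReal (G d (y - x) * esc d (Set.range (pos (0 : V d) sB)) y)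
    else 0

-- auxiliary defs
def extS {d n : ℕ} (s : Fin n → V d) : ℕ → V d := fun i => if h : i < n then s ⟨i, h⟩ else 0

open Classical in
lemma probN_eq (d n : ℕ) (P : (ℕ → V d) → Prop) :
    probN d n P = (((Fintype.piFinset fun _ : Fin n => steps d).filter
      (fun s => P (extS s))).card : ℝ) / ((2 * d : ℕ) : ℝ) ^ n := rfl

lemma card_steps (d : ℕ) : (steps d).card = 2 * d := by
  rw [steps, Finset.card_image_of_injective _ ?_, Finset.card_univ]
  · simp [Fintype.card_prod]; ring
  · rintro ⟨i, b⟩ ⟨j, c⟩ h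
    have hi := congrFun h i
    have hj := congrFun h j
    by_cases hij : i = j
    · subst hij
      simp only [if_pos rfl] at hi
      rcases b <;> rcases c <;> simp_all
    · simp only [if_pos rfl, if_neg (Ne.symm hij)] at hi
      rcases b <;> simp_all

lemma steps_nonempty {d : ℕ} (hd : 0 < d) : (steps d).Nonempty := by
  have : (steps d).card = 2 * d := card_steps d
  rw [← Finset.card_pos, this]; omega

lemma neg_mem_steps {d : ℕ} {v : V d} (h : v ∈ steps d) : -v ∈ steps d := by
  simp only [steps, Finset.mem_image] at h ⊢
  obtain ⟨⟨i, b⟩, -, rfl⟩ := h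
  refine ⟨⟨i, !b⟩, Finset.mem_univ _, ?_⟩
  funext j
  rcases b <;> by_cases hj : j = i <;> simp [hj]

lemma pos_zero {d : ℕ} (x : V d) (s : ℕ → V d) : pos x s 0 = x := by simp [pos]

lemma pos_congr {d : ℕ} (x : V d) {s t : ℕ → V d} (k : ℕ) (h : ∀ i < k, s i = t i) :
    pos x s k = pos x t k := by
  unfold pos; congr 1; exact Finset.sum_congr rfl fun i hi => h i (Finset.mem_range.mp hi)

lemma pos_shift {d : ℕ} (x : V d) (s : ℕ → V d) (n k : ℕ) :
    pos x s (n + k) = pos (pos x s n) (fun i => s (n + i)) k := by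
  induction k with
  | zero => simp [pos]
  | succ k ih => rw [← Nat.add_assoc]; unfold pos at *
                 rw [Finset.sum_range_succ, Finset.sum_range_succ]
                 simp only at ih ⊢
                 rw [← add_assoc, ih, add_assoc]

lemma sum_piFinset_append {d : ℕ} {M : Type*} [AddCommMonoid M] (n m : ℕ)
    (f : (Fin (n + m) → V d) → M) :
    ∑ s ∈ Fintype.piFinset (fun _ : Fin (n + m) => steps d), f s
      = ∑ a ∈ Fintype.piFinset (fun _ : Fin n => steps d),
          ∑ b ∈ Fintype.piFinset (fun _ : Fin m => steps d), f (Fin.append a b) := by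
  rw [← Finset.sum_product']
  have key : ∀ s : Fin (n + m) → V d,
      Fin.append (fun i => s (Fin.castAdd m i)) (fun j => s (Fin.natAdd n j)) = s := by
    intro s; funext i
    induction i using Fin.addCases with
    | left i => rw [Fin.append_left]
    | right i => rw [Fin.append_right]
  refine Finset.sum_nbij'
    (i := fun s => (fun i => s (Fin.castAdd m i), fun j => s (Fin.natAdd n j)))
    (j := fun p => Fin.append p.1 p.2) ?_ ?_ ?_ ?_ ?_
  · intro s hs
    rw [Fintype.mem_piFinset] at hs
    rw [Finset.mem_product, Fintype.mem_piFinset, Fintype.mem_piFinset]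
    exact ⟨fun i => hs _, fun j => hs _⟩
  · intro p hp
    rw [Finset.mem_product, Fintype.mem_piFinset, Fintype.mem_piFinset] at hp
    rw [Fintype.mem_piFinset]
    intro i
    induction i using Fin.addCases with
    | left i => simpa only [Fin.append_left] using hp.1 i
    | right i => simpa only [Fin.append_right] using hp.2 i
  · intro s _; exact key s
  · intro p _
    ext : 1
    · funext i; simp [Fin.append_left]
    · funext j; simp [Fin.append_right]
  · intro s _; rw [key]

lemma extS_append_left {d n m : ℕ} (a : Fin n → V d) (b : Fin m → V d) {i : ℕ} (h : i < n) :
    extS (Fin.append a b) i = extS a i := by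
  have h2 : i < n + m := lt_of_lt_of_le h (Nat.le_add_right _ _)
  simp only [extS, dif_pos h, dif_pos h2]
  exact Fin.append_left a b ⟨i, h⟩

lemma extS_append_right {d n m : ℕ} (a : Fin n → V d) (b : Fin m → V d) :
    (fun i => extS (Fin.append a b) (n + i)) = extS b := by
  funext i
  by_cases h : i < m
  · have h2 : n + i < n + m := by omega
    simp only [extS, dif_pos h, dif_pos h2]
    exact Fin.append_right a b ⟨i, h⟩
  · have h2 : ¬ n + i < n + m := by omega
    simp [extS, dif_neg h, dif_neg h2]

-- ## Generic finite counting helpers (classical instances everywhere)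
section helpers
open Classical
variable {α : Type*}

lemma card_filter_mono' {s : Finset α} (p q : α → Prop)
    (h : ∀ a ∈ s, p a → q a) :
    (s.filter p).card ≤ (s.filter q).card := by
  apply Finset.card_le_card
  intro a ha
  rw [Finset.mem_filter] at ha ⊢
  exact ⟨ha.1, h a ha.1 ha.2⟩

lemma filter_card_eq_card {s : Finset α} (p : α → Prop)
    (h : ∀ a ∈ s, p a) : (s.filter p).card = s.card := by
  rw [Finset.filter_true_of_mem h]

lemma card_filter_le_sum_card {ι : Type*} {s : Finset α} (I : Finset ι)
    (p : ι → α → Prop) (r : α → Prop)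
    (h : ∀ a ∈ s, r a → ∃ i ∈ I, p i a) :
    (s.filter r).card ≤ ∑ i ∈ I, (s.filter (p i)).card := by
  calc (s.filter r).card ≤ (I.biUnion fun i => s.filter (p i)).card := by
        apply Finset.card_le_card
        intro a ha
        rw [Finset.mem_filter] at ha
        obtain ⟨i, hi, hpi⟩ := h a ha.1 ha.2
        exact Finset.mem_biUnion.mpr ⟨i, hi, Finset.mem_filter.mpr ⟨ha.1, hpi⟩⟩
    _ ≤ _ := Finset.card_biUnion_le

lemma sum_card_le_card_filter {ι : Type*} {s : Finset α} (I : Finset ι)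
    (p : ι → α → Prop) (r : α → Prop)
    (hdisj : ∀ i ∈ I, ∀ j ∈ I, i ≠ j → ∀ a ∈ s, p i a → p j a → False)
    (himp : ∀ i ∈ I, ∀ a ∈ s, p i a → r a) :
    ∑ i ∈ I, (s.filter (p i)).card ≤ (s.filter r).card := by
  rw [← Finset.card_biUnion]
  · apply Finset.card_le_card
    intro a ha
    obtain ⟨i, hi, hai⟩ := Finset.mem_biUnion.mp ha
    rw [Finset.mem_filter] at hai ⊢
    exact ⟨hai.1, himp i hi a hai.1 hai.2⟩
  · intro i hi j hj hij
    dsimp only [Function.onFun]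
    rw [Finset.disjoint_left]
    intro a ha1 ha2
    rw [Finset.mem_filter] at ha1 ha2
    exact hdisj i hi j hj hij a ha1.1 ha1.2 ha2.2

lemma card_filter_and_not_add {s : Finset α} (p q w : α → Prop)
    (h : ∀ a ∈ s, q a → p a) (hw : ∀ a, w a ↔ (p a ∧ ¬ q a)) :
    (s.filter w).card + (s.filter q).card = (s.filter p).card := by
  have hsub : s.filter q ⊆ s.filter p := by
    intro a ha; rw [Finset.mem_filter] at ha ⊢; exact ⟨ha.1, h a ha.1 ha.2⟩
  have hset : s.filter w = s.filter p \ s.filter q := by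
    ext a
    simp only [Finset.mem_filter, Finset.mem_sdiff, hw]
    tauto
  rw [hset, Finset.card_sdiff_of_subset hsub, Nat.sub_add_cancel (Finset.card_le_card hsub)]

end helpers

section probNLemmas
open Classical

variable {d : ℕ}

lemma probN_nonneg (d n : ℕ) (P : (ℕ → V d) → Prop) : 0 ≤ probN d n P := by
  rw [probN_eq]; positivity

lemma probN_congr {n : ℕ} {P Q : (ℕ → V d) → Prop} (h : ∀ s, P s ↔ Q s) :
    probN d n P = probN d n Q := by
  have : P = Q := funext fun s => propext (h s)
  rw [this]

lemma two_d_pow_pos (hd : 0 < d) (n : ℕ) : (0 : ℝ) < ((2 * d : ℕ) : ℝ) ^ n := by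
  have h1 : (0 : ℝ) < ((2 * d : ℕ) : ℝ) := by exact_mod_cast (by omega : 0 < 2 * d)
  positivity

lemma probN_mono (hd : 0 < d) {n : ℕ} {P Q : (ℕ → V d) → Prop} (h : ∀ s, P s → Q s) :
    probN d n P ≤ probN d n Q := by
  rw [probN_eq, probN_eq]
  refine div_le_div_of_nonneg_right ?_ (two_d_pow_pos hd n).le
  exact_mod_cast card_filter_mono' _ _ (fun s _ hs => h _ hs)

lemma probN_true (hd : 0 < d) (n : ℕ) : probN d n (fun _ => True) = 1 := by
  rw [probN_eq, div_eq_one_iff_eq (two_d_pow_pos hd n).ne']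
  norm_cast
  refine (filter_card_eq_card _ fun _ _ => trivial).trans ?_
  rw [Fintype.card_piFinset]
  simp [card_steps]

/-- counting helper for the product structure -/
lemma card_filter_piFinset_mul (n m : ℕ)
    (p : (Fin n → V d) → Prop) (q : (Fin m → V d) → Prop) (r : (Fin (n + m) → V d) → Prop)
    (hr : ∀ a b, r (Fin.append a b) ↔ p a ∧ q b) :
    ((Fintype.piFinset fun _ : Fin (n + m) => steps d).filter r).card
      = ((Fintype.piFinset fun _ : Fin n => steps d).filter p).card
        * ((Fintype.piFinset fun _ : Fin m => steps d).filter q).card := by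
  rw [Finset.card_filter, Finset.card_filter, Finset.card_filter]
  refine (sum_piFinset_append n m _).trans ?_
  rw [Finset.sum_mul_sum]
  refine Finset.sum_congr rfl fun a _ => Finset.sum_congr rfl fun b _ => ?_
  by_cases h1 : p a <;> by_cases h2 : q b <;> simp [hr, h1, h2]

/-- Markov property / product structure at finite horizon. -/
lemma probN_mul_aux (hd : 0 < d) (n m : ℕ) (P Q : (ℕ → V d) → Prop)
    (hP : ∀ s t : ℕ → V d, (∀ i < n, s i = t i) → P s → P t) :
    probN d (n + m) (fun s => P s ∧ Q (fun i => s (n + i)))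
      = probN d n P * probN d m Q := by
  rw [probN_eq, probN_eq, probN_eq]
  rw [div_mul_div_comm, ← pow_add]
  congr 1
  have key : ∀ (a : Fin n → V d) (b : Fin m → V d),
      (P (extS (Fin.append a b)) ∧ Q fun i => extS (Fin.append a b) (n + i))
        ↔ (P (extS a) ∧ Q (extS b)) := by
    intro a b
    rw [extS_append_right a b]
    have hPiff : P (extS (Fin.append a b)) ↔ P (extS a) :=
      ⟨hP _ _ (fun i hi => extS_append_left a b hi),
       hP _ _ (fun i hi => (extS_append_left a b hi).symm)⟩
    rw [hPiff]
  exact_mod_cast card_filter_piFinset_mul n m _ _ _ key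

lemma probN_extend (hd : 0 < d) (n m : ℕ) (P : (ℕ → V d) → Prop)
    (hP : ∀ s t : ℕ → V d, (∀ i < n, s i = t i) → P s → P t) :
    probN d (n + m) P = probN d n P := by
  have h2 := probN_mul_aux hd n m P (fun _ => True) hP
  rw [probN_true hd, mul_one] at h2
  rw [← h2]
  exact probN_congr fun s => by simp

/-- Union bound. -/
lemma probN_le_sum {ι : Type*} (hd : 0 < d) {n : ℕ} (I : Finset ι)
    (P : ι → (ℕ → V d) → Prop) (R : (ℕ → V d) → Prop)
    (h : ∀ s, R s → ∃ i ∈ I, P i s) :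
    probN d n R ≤ ∑ i ∈ I, probN d n (P i) := by
  simp only [probN_eq]
  rw [← Finset.sum_div]
  refine div_le_div_of_nonneg_right ?_ (two_d_pow_pos hd n).le
  exact_mod_cast card_filter_le_sum_card I _ _ (fun s _ hs => h _ hs)

/-- Finite additivity bound for pairwise disjoint events. -/
lemma sum_probN_le {ι : Type*} (hd : 0 < d) {n : ℕ} (I : Finset ι)
    (P : ι → (ℕ → V d) → Prop) (R : (ℕ → V d) → Prop)
    (hdisj : ∀ i ∈ I, ∀ j ∈ I, i ≠ j → ∀ s : ℕ → V d, P i s → P j s → False)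
    (himp : ∀ i ∈ I, ∀ s : ℕ → V d, P i s → R s) :
    ∑ i ∈ I, probN d n (P i) ≤ probN d n R := by
  simp only [probN_eq]
  rw [← Finset.sum_div]
  refine div_le_div_of_nonneg_right ?_ (two_d_pow_pos hd n).le
  have key := sum_card_le_card_filter (s := Fintype.piFinset fun _ : Fin n => steps d) I
    (fun i a => P i (extS a)) (fun a => R (extS a))
    (fun i hi j hj hij s _ h1 h2 => hdisj i hi j hj hij _ h1 h2)
    (fun i hi s _ hs => himp i hi _ hs)
  exact_mod_cast key

lemma probN_diff {n : ℕ} (P Q : (ℕ → V d) → Prop) (h : ∀ s, Q s → P s) :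
    probN d n (fun s => P s ∧ ¬ Q s) = probN d n P - probN d n Q := by
  simp only [probN_eq]
  rw [div_sub_div_same]
  congr 1
  rw [eq_sub_iff_add_eq]
  exact_mod_cast card_filter_and_not_add _ _ _ (fun s _ hs => h _ hs) (fun a => Iff.rfl)

end probNLemmas
-- ## Path reversal
section reversal
open Classical

variable {d : ℕ}

def revS {d n : ℕ} (s : Fin n → V d) : Fin n → V d := fun i => - s i.rev

lemma revS_revS {n : ℕ} (s : Fin n → V d) : revS (revS s) = s := by
  funext i
  simp [revS, Fin.rev_rev]

lemma revS_mem {n : ℕ} {s : Fin n → V d} (h : s ∈ Fintype.piFinset fun _ : Fin n => steps d) :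
    revS s ∈ Fintype.piFinset fun _ : Fin n => steps d := by
  rw [Fintype.mem_piFinset] at h ⊢
  exact fun i => neg_mem_steps (h i.rev)

lemma sum_range_rev {M : Type*} [AddCommMonoid M] (f : ℕ → M) {k n : ℕ} (hk : k ≤ n) :
    ∑ i ∈ Finset.range k, f (n - 1 - i) = ∑ j ∈ Finset.Ico (n - k) n, f j := by
  refine Finset.sum_nbij' (i := fun i => n - 1 - i) (j := fun j => n - 1 - j) ?_ ?_ ?_ ?_ ?_
  · intro i hi; rw [Finset.mem_range] at hi; rw [Finset.mem_Ico]; omega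
  · intro j hj; rw [Finset.mem_Ico] at hj; rw [Finset.mem_range]; omega
  · intro i hi; rw [Finset.mem_range] at hi; omega
  · intro j hj; rw [Finset.mem_Ico] at hj; omega
  · intro i _; rfl

lemma pos_revS {n : ℕ} (z : V d) (s : Fin n → V d) {k : ℕ} (hk : k ≤ n) :
    pos z (extS (revS s)) k
      = z - pos (0 : V d) (extS s) n + pos (0 : V d) (extS s) (n - k) := by
  have hstep : ∀ i < n, extS (revS s) i = - extS s (n - 1 - i) := by
    intro i hi
    have h2 : n - 1 - i < n := by omega
    simp only [extS, dif_pos hi, dif_pos h2, revS]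
    have h3 : (⟨i, hi⟩ : Fin n).rev = ⟨n - 1 - i, h2⟩ :=
      Fin.ext (by simp only [Fin.val_rev]; omega)
    rw [h3]
  unfold pos
  have h1 : ∑ i ∈ Finset.range k, extS (revS s) i
      = - ∑ i ∈ Finset.range k, extS s (n - 1 - i) := by
    rw [← Finset.sum_neg_distrib]
    exact Finset.sum_congr rfl fun i hi => hstep i (lt_of_lt_of_le (Finset.mem_range.mp hi) hk)
  rw [h1, sum_range_rev _ hk]
  have h2 : ∑ i ∈ Finset.range (n - k), extS s i + ∑ j ∈ Finset.Ico (n - k) n, extS s j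
      = ∑ i ∈ Finset.range n, extS s i := by
    simp only [Finset.range_eq_Ico]
    exact Finset.sum_Ico_consecutive _ (Nat.zero_le _) (Nat.sub_le n k)
  rw [← h2]
  abel

end reversal
section reversal2
open Classical
variable {d : ℕ}

lemma pos_eq_add (x : V d) (t : ℕ → V d) (m : ℕ) :
    pos x t m = x + pos (0 : V d) t m := by
  unfold pos; rw [zero_add]

lemma probN_reverse (n : ℕ) (x y : V d) (B : Set (V d)) :
    probN d n (fun s => pos x s n = y ∧ ∀ k < n, pos x s k ∉ B)
      = probN d n (fun s => pos y s n = x ∧ ∀ k, 1 ≤ k → k ≤ n → pos y s k ∉ B) := by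
  have main : ∀ (u v : V d) (s : Fin n → V d),
      (pos u (extS s) n = v ∧ ∀ k < n, pos u (extS s) k ∉ B) →
      (pos v (extS (revS s)) n = u ∧ ∀ k, 1 ≤ k → k ≤ n → pos v (extS (revS s)) k ∉ B) := by
    intro u v s ⟨h1, h2⟩
    have hpos : ∀ k ≤ n, pos v (extS (revS s)) k = pos u (extS s) (n - k) := by
      intro k hk
      rw [pos_revS v s hk]
      rw [pos_eq_add u (extS s) n] at h1
      rw [pos_eq_add u (extS s) (n - k)]
      rw [← h1]
      abel
    constructor
    · rw [hpos n le_rfl, Nat.sub_self, pos_zero]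
    · intro k hk1 hk2
      rw [hpos k hk2]
      exact h2 (n - k) (by omega)
  have main' : ∀ (u v : V d) (t : Fin n → V d),
      (pos v (extS t) n = u ∧ ∀ k, 1 ≤ k → k ≤ n → pos v (extS t) k ∉ B) →
      (pos u (extS (revS t)) n = v ∧ ∀ k < n, pos u (extS (revS t)) k ∉ B) := by
    intro u v t ⟨h1, h2⟩
    have hpos : ∀ k ≤ n, pos u (extS (revS t)) k = pos v (extS t) (n - k) := by
      intro k hk
      rw [pos_revS u t hk]
      rw [pos_eq_add v (extS t) n] at h1
      rw [pos_eq_add v (extS t) (n - k)]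
      rw [← h1]
      abel
    constructor
    · rw [hpos n le_rfl, Nat.sub_self, pos_zero]
    · intro k hk
      rw [hpos k (le_of_lt hk)]
      exact h2 (n - k) (by omega) (by omega)
  rw [probN_eq, probN_eq]
  congr 1
  norm_cast
  refine Finset.card_nbij' (i := revS) (j := revS) ?_ ?_ ?_ ?_
  · intro s hs
    simp only [Finset.mem_coe, Finset.mem_filter] at hs ⊢
    exact ⟨revS_mem hs.1, main x y s hs.2⟩
  · intro t ht
    simp only [Finset.mem_coe, Finset.mem_filter] at ht ⊢
    exact ⟨revS_mem ht.1, main' x y t ht.2⟩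
  · intro s _; exact revS_revS s
  · intro t _; exact revS_revS t

end reversal2

-- ## Escape probability basics
section escLemmas
open Classical
variable {d : ℕ}

/-- the finite-horizon escape probability -/
noncomputable def escN (d : ℕ) (A : Set (V d)) (x : V d) (n : ℕ) : ℝ :=
  probN d n (fun s => ∀ k, 1 ≤ k → k ≤ n → pos x s k ∉ A)

lemma esc_eq_iInf (A : Set (V d)) (x : V d) : esc d A x = ⨅ n : ℕ, escN d A x n := rfl

lemma escN_bddBelow (A : Set (V d)) (x : V d) :
    BddBelow (Set.range (escN d A x)) := by
  refine ⟨0, ?_⟩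
  rintro r ⟨n, rfl⟩
  exact probN_nonneg d n _

lemma esc_nonneg (A : Set (V d)) (x : V d) : 0 ≤ esc d A x := by
  rw [esc_eq_iInf]
  exact le_ciInf fun n => probN_nonneg d n _

lemma esc_le_escN (A : Set (V d)) (x : V d) (n : ℕ) : esc d A x ≤ escN d A x n := by
  rw [esc_eq_iInf]
  exact ciInf_le (escN_bddBelow A x) n

lemma escN_antitone (hd : 0 < d) (A : Set (V d)) (x : V d) : Antitone (escN d A x) := by
  apply antitone_nat_of_succ_le
  intro n
  unfold escN
  have hcons : probN d (n + 1) (fun s => ∀ k, 1 ≤ k → k ≤ n → pos x s k ∉ A)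
      = probN d n (fun s => ∀ k, 1 ≤ k → k ≤ n → pos x s k ∉ A) := by
    apply probN_extend hd
    intro s t hst hs k hk1 hk2
    rw [← pos_congr x k (fun i hi => hst i (lt_of_lt_of_le hi hk2))]
    exact hs k hk1 hk2
  rw [← hcons]
  apply probN_mono hd
  intro s hs k hk1 hk2
  exact hs k hk1 (le_trans hk2 (Nat.le_succ n))

lemma tendsto_escN (hd : 0 < d) (A : Set (V d)) (x : V d) :
    Tendsto (escN d A x) atTop (nhds (esc d A x)) := by
  rw [esc_eq_iInf]
  exact tendsto_atTop_ciInf (escN_antitone hd A x) (escN_bddBelow A x)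

lemma esc_anti_set {A A' : Set (V d)} (hd : 0 < d) (h : A ⊆ A') (x : V d) :
    esc d A' x ≤ esc d A x := by
  rw [esc_eq_iInf, esc_eq_iInf]
  refine ciInf_mono (escN_bddBelow A' x) fun n => ?_
  apply probN_mono hd
  intro s hs k hk1 hk2 hmem
  exact hs k hk1 hk2 (h hmem)

end escLemmas
-- ## The three finite-horizon estimates
section mainSteps
open Classical
variable {d : ℕ}

/-- Step A: last-exit decomposition bound,
`Σ_{y∈B} Σ_{n<M} p_n(x,y) esc_B(y) ≤ P_x(hit B before M)` at horizon `N`. -/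
lemma stepA (hd : 0 < d) (B : Finset (V d)) (x : V d) (M N : ℕ) (hMN : M ≤ N) :
    ∑ y ∈ B, ∑ n ∈ Finset.range M, probN d n (fun s => pos x s n = y) * esc d (↑B) y
      ≤ probN d N (fun s => ∃ n, n < M ∧ pos x s n ∈ (↑B : Set (V d))) := by
  rw [← Finset.sum_product']
  have key : ∀ p ∈ B ×ˢ Finset.range M,
      probN d p.2 (fun s => pos x s p.2 = p.1) * esc d (↑B) p.1
        ≤ probN d N (fun s => pos x s p.2 = p.1 ∧
            ∀ k, p.2 < k → k ≤ N → pos x s k ∉ (↑B : Set (V d))) := by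
    rintro ⟨y, n⟩ hp
    rw [Finset.mem_product, Finset.mem_range] at hp
    obtain ⟨hyB, hnM⟩ := hp
    have hn : n ≤ N := le_trans (le_of_lt hnM) hMN
    have hN : n + (N - n) = N := by omega
    have step1 : probN d n (fun s => pos x s n = y) * esc d (↑B) y
        ≤ probN d n (fun s => pos x s n = y) * escN d (↑B) y (N - n) :=
      mul_le_mul_of_nonneg_left (esc_le_escN _ _ _) (probN_nonneg d n _)
    refine le_trans step1 (le_of_eq ?_)
    have hprod := probN_mul_aux hd n (N - n) (fun s => pos x s n = y)
      (fun t => ∀ k, 1 ≤ k → k ≤ N - n → pos y t k ∉ (↑B : Set (V d)))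
      (fun s t hst h => by rw [← pos_congr x n hst]; exact h)
    rw [escN, ← hprod]
    have hcongr : ∀ s : ℕ → V d,
        (pos x s n = y ∧ ∀ k, 1 ≤ k → k ≤ N - n → pos y (fun i => s (n + i)) k ∉ (↑B : Set (V d)))
          ↔ (pos x s n = y ∧ ∀ k, n < k → k ≤ n + (N - n) → pos x s k ∉ (↑B : Set (V d))) := by
      intro s
      constructor
      · rintro ⟨h1, h2⟩
        refine ⟨h1, fun k hk1 hk2 => ?_⟩
        have hk : k = n + (k - n) := by omega
        rw [hk, pos_shift, h1]
        exact h2 (k - n) (by omega) (by omega)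
      · rintro ⟨h1, h2⟩
        refine ⟨h1, fun k hk1 hk2 => ?_⟩
        rw [← h1, ← pos_shift]
        exact h2 (n + k) (by omega) (by omega)
    rw [probN_congr hcongr, hN]
  refine le_trans (Finset.sum_le_sum key) ?_
  refine sum_probN_le hd _ _ _ ?_ ?_
  · rintro ⟨y, n⟩ hp ⟨y', n'⟩ hp' hne s ⟨e1, e2⟩ ⟨f1, f2⟩
    rw [Finset.mem_product, Finset.mem_range] at hp hp'
    rcases Nat.lt_trichotomy n n' with h | h | h
    · exact e2 n' h (le_trans (le_of_lt hp'.2) hMN) (f1 ▸ Finset.mem_coe.mpr hp'.1)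
    · exact hne (by rw [Prod.ext_iff]; exact ⟨by rw [← e1, ← f1, h], h⟩)
    · exact f2 n h (le_trans (le_of_lt hp.2) hMN) (e1 ▸ Finset.mem_coe.mpr hp.1)
  · rintro ⟨y, n⟩ hp s ⟨e1, _⟩
    rw [Finset.mem_product, Finset.mem_range] at hp
    exact ⟨n, hp.2, e1 ▸ Finset.mem_coe.mpr hp.1⟩

/-- Step B: first-hit decomposition (union bound) + consistency + reversal. -/
lemma stepB (hd : 0 < d) (B : Finset (V d)) (x : V d) (M N : ℕ) (hMN : M ≤ N) :
    probN d N (fun s => ∃ n, n < M ∧ pos x s n ∈ (↑B : Set (V d)))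
      ≤ ∑ n ∈ Finset.range M, ∑ y ∈ B,
          probN d n (fun s => pos y s n = x ∧
            ∀ k, 1 ≤ k → k ≤ n → pos y s k ∉ (↑B : Set (V d))) := by
  rw [← Finset.sum_product']
  have step1 : probN d N (fun s => ∃ n, n < M ∧ pos x s n ∈ (↑B : Set (V d)))
      ≤ ∑ p ∈ Finset.range M ×ˢ B, probN d N (fun s => pos x s p.1 = p.2 ∧
          ∀ k, k < p.1 → pos x s k ∉ (↑B : Set (V d))) := by
    refine probN_le_sum hd _ _ _ ?_
    intro s hs
    have hex : ∃ m, m < M ∧ pos x s m ∈ (↑B : Set (V d)) := hs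
    let n₀ := Nat.find hex
    have hspec := Nat.find_spec hex
    refine ⟨(n₀, pos x s n₀), ?_, rfl, ?_⟩
    · rw [Finset.mem_product, Finset.mem_range]
      exact ⟨hspec.1, Finset.mem_coe.mp hspec.2⟩
    · intro k hk hmem
      exact (Nat.find_min hex hk) ⟨lt_trans hk hspec.1, hmem⟩
  refine le_trans step1 (le_of_eq (Finset.sum_congr rfl ?_))
  rintro ⟨n, y⟩ hp
  rw [Finset.mem_product, Finset.mem_range] at hp
  have hN : n + (N - n) = N := by omega
  have hext : probN d N (fun s => pos x s n = y ∧
      ∀ k, k < n → pos x s k ∉ (↑B : Set (V d)))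
      = probN d n (fun s => pos x s n = y ∧
      ∀ k, k < n → pos x s k ∉ (↑B : Set (V d))) := by
    rw [← hN]
    refine probN_extend hd n (N - n) _ ?_
    intro s t hst h
    obtain ⟨h1, h2⟩ := h
    refine ⟨by rw [← pos_congr x n hst]; exact h1, fun k hk => ?_⟩
    rw [← pos_congr x k (fun i hi => hst i (by omega))]
    exact h2 k hk
  rw [hext]
  exact probN_reverse n x y (↑B)

/-- Step D: disjoint decomposition at the last visit to `A \ B`. -/
lemma stepD (hd : 0 < d) (A B : Finset (V d)) (y : V d) (hy : y ∈ B) (M N : ℕ)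
    (hMN : M ≤ N) :
    ∑ p ∈ Finset.range M ×ˢ (A \ B),
        probN d p.1 (fun s => pos y s p.1 = p.2 ∧
          ∀ k, 1 ≤ k → k ≤ p.1 → pos y s k ∉ (↑B : Set (V d))) * esc d (↑(A ∪ B)) p.2
      ≤ escN d (↑B) y N - escN d (↑(A ∪ B)) y N := by
  have key : ∀ p ∈ Finset.range M ×ˢ (A \ B),
      probN d p.1 (fun s => pos y s p.1 = p.2 ∧
          ∀ k, 1 ≤ k → k ≤ p.1 → pos y s k ∉ (↑B : Set (V d))) * esc d (↑(A ∪ B)) p.2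
        ≤ probN d N (fun s => (pos y s p.1 = p.2 ∧
            (∀ k, 1 ≤ k → k ≤ p.1 → pos y s k ∉ (↑B : Set (V d)))) ∧
            ∀ k, p.1 < k → k ≤ N → pos y s k ∉ (↑(A ∪ B) : Set (V d))) := by
    rintro ⟨n, x⟩ hp
    rw [Finset.mem_product, Finset.mem_range] at hp
    obtain ⟨hnM, hxAB⟩ := hp
    have hN : n + (N - n) = N := by omega
    have step1 : probN d n (fun s => pos y s n = x ∧
          ∀ k, 1 ≤ k → k ≤ n → pos y s k ∉ (↑B : Set (V d))) * esc d (↑(A ∪ B)) x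
        ≤ probN d n (fun s => pos y s n = x ∧
          ∀ k, 1 ≤ k → k ≤ n → pos y s k ∉ (↑B : Set (V d)))
            * escN d (↑(A ∪ B)) x (N - n) :=
      mul_le_mul_of_nonneg_left (esc_le_escN _ _ _) (probN_nonneg d n _)
    refine le_trans step1 (le_of_eq ?_)
    have hprod := probN_mul_aux hd n (N - n)
      (fun s => pos y s n = x ∧ ∀ k, 1 ≤ k → k ≤ n → pos y s k ∉ (↑B : Set (V d)))
      (fun t => ∀ k, 1 ≤ k → k ≤ N - n → pos x t k ∉ (↑(A ∪ B) : Set (V d)))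
      ?_
    · rw [escN, ← hprod]
      have hcongr : ∀ s : ℕ → V d,
          ((pos y s n = x ∧ ∀ k, 1 ≤ k → k ≤ n → pos y s k ∉ (↑B : Set (V d))) ∧
            ∀ k, 1 ≤ k → k ≤ N - n → pos x (fun i => s (n + i)) k ∉ (↑(A ∪ B) : Set (V d)))
          ↔ ((pos y s n = x ∧ ∀ k, 1 ≤ k → k ≤ n → pos y s k ∉ (↑B : Set (V d))) ∧
            ∀ k, n < k → k ≤ n + (N - n) → pos y s k ∉ (↑(A ∪ B) : Set (V d))) := by
        intro s
        constructor
        · rintro ⟨h1, h2⟩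
          refine ⟨h1, fun k hk1 hk2 => ?_⟩
          have hk : k = n + (k - n) := by omega
          rw [hk, pos_shift, h1.1]
          exact h2 (k - n) (by omega) (by omega)
        · rintro ⟨h1, h2⟩
          refine ⟨h1, fun k hk1 hk2 => ?_⟩
          rw [← h1.1, ← pos_shift]
          exact h2 (n + k) (by omega) (by omega)
      rw [probN_congr hcongr, hN]
    · intro s t hst h
      obtain ⟨h1, h2⟩ := h
      refine ⟨by rw [← pos_congr y n hst]; exact h1, fun k hk1 hk2 => ?_⟩
      rw [← pos_congr y k (fun i hi => hst i (by omega))]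
      exact h2 k hk1 hk2
  refine le_trans (Finset.sum_le_sum key) ?_
  have hsub : ∀ s : ℕ → V d,
      (∀ k, 1 ≤ k → k ≤ N → pos y s k ∉ (↑(A ∪ B) : Set (V d)))
      → (∀ k, 1 ≤ k → k ≤ N → pos y s k ∉ (↑B : Set (V d))) := by
    intro s h k hk1 hk2 hmem
    exact h k hk1 hk2 (by simp only [Finset.coe_union, Set.mem_union]; right; exact hmem)
  have hdiff := probN_diff (d := d) (n := N)
    (fun s => ∀ k, 1 ≤ k → k ≤ N → pos y s k ∉ (↑B : Set (V d)))
    (fun s => ∀ k, 1 ≤ k → k ≤ N → pos y s k ∉ (↑(A ∪ B) : Set (V d))) hsub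
  rw [escN, escN, ← hdiff]
  refine sum_probN_le hd _ _ _ ?_ ?_
  · rintro ⟨n, x⟩ hp ⟨n', x'⟩ hp' hne s ⟨e1, e2⟩ ⟨f1, f2⟩
    rw [Finset.mem_product, Finset.mem_range] at hp hp'
    have hx : (x : V d) ∈ (↑(A ∪ B) : Set (V d)) := by
      have := hp.2
      rw [Finset.mem_sdiff] at this
      simp only [Finset.coe_union, Set.mem_union]
      left; exact this.1
    have hx' : (x' : V d) ∈ (↑(A ∪ B) : Set (V d)) := by
      have := hp'.2
      rw [Finset.mem_sdiff] at this
      simp only [Finset.coe_union, Set.mem_union]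
      left; exact this.1
    rcases Nat.lt_trichotomy n n' with h | h | h
    · exact e2 n' h (le_trans (le_of_lt hp'.1) hMN) (f1.1 ▸ hx')
    · exact hne (by rw [Prod.ext_iff]; exact ⟨h, by rw [← e1.1, ← f1.1, h]⟩)
    · exact f2 n h (le_trans (le_of_lt hp.1) hMN) (e1.1 ▸ hx)
  · rintro ⟨n, x⟩ hp s ⟨⟨e1, e2⟩, e3⟩
    rw [Finset.mem_product, Finset.mem_range, Finset.mem_sdiff] at hp
    have hn1 : 1 ≤ n := by
      by_contra h
      have hn0 : n = 0 := by omega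
      rw [hn0, pos_zero] at e1
      exact hp.2.2 (e1 ▸ hy)
    constructor
    · intro k hk1 hk2
      by_cases hkn : k ≤ n
      · exact e2 k hk1 hkn
      · intro hmem
        refine e3 k (by omega) hk2 ?_
        simp only [Finset.coe_union, Set.mem_union]
        right; exact hmem
    · intro hall
      refine hall n hn1 (le_trans (le_of_lt hp.1) hMN) ?_
      rw [e1]
      simp only [Finset.coe_union, Set.mem_union]
      left; exact Finset.mem_coe.mpr hp.2.1
end mainSteps
-- ## Main estimate
section mainM
open Classical
variable {d : ℕ}

lemma sum_rearrange {α β : Type*} (S : Finset α) (T : Finset β) (Mset : Finset ℕ)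
    (t : ℕ → α → β → ℝ) :
    ∑ x ∈ S, ∑ n ∈ Mset, ∑ y ∈ T, t n x y
      = ∑ y ∈ T, ∑ p ∈ Mset ×ˢ S, t p.1 p.2 y := by
  calc ∑ x ∈ S, ∑ n ∈ Mset, ∑ y ∈ T, t n x y
      = ∑ n ∈ Mset, ∑ x ∈ S, ∑ y ∈ T, t n x y := Finset.sum_comm
    _ = ∑ n ∈ Mset, ∑ y ∈ T, ∑ x ∈ S, t n x y :=
        Finset.sum_congr rfl fun n _ => Finset.sum_comm
    _ = ∑ y ∈ T, ∑ n ∈ Mset, ∑ x ∈ S, t n x y := Finset.sum_comm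
    _ = ∑ y ∈ T, ∑ p ∈ Mset ×ˢ S, t p.1 p.2 y :=
        Finset.sum_congr rfl fun y _ => (Finset.sum_product' _ _ _).symm

lemma mainM (hd : 0 < d) (A B : Finset (V d)) (M : ℕ) :
    (∑ x ∈ A \ B, ∑ y ∈ B, ∑ n ∈ Finset.range M,
        esc d (↑(A ∪ B)) x * probN d n (fun s => pos 0 s n = y - x) * esc d (↑B) y)
      ≤ ∑ y ∈ B, (esc d (↑B) y - esc d (↑(A ∪ B)) y) := by
  have hbound : ∀ N, M ≤ N →
      (∑ x ∈ A \ B, ∑ y ∈ B, ∑ n ∈ Finset.range M,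
        esc d (↑(A ∪ B)) x * probN d n (fun s => pos 0 s n = y - x) * esc d (↑B) y)
      ≤ ∑ y ∈ B, (escN d (↑B) y N - escN d (↑(A ∪ B)) y N) := by
    intro N hMN
    have hstep0 : (∑ x ∈ A \ B, ∑ y ∈ B, ∑ n ∈ Finset.range M,
        esc d (↑(A ∪ B)) x * probN d n (fun s => pos 0 s n = y - x) * esc d (↑B) y)
        = ∑ x ∈ A \ B, esc d (↑(A ∪ B)) x * ∑ y ∈ B, ∑ n ∈ Finset.range M,
            probN d n (fun s => pos x s n = y) * esc d (↑B) y := by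
      refine Finset.sum_congr rfl fun x _ => ?_
      rw [Finset.mul_sum]
      refine Finset.sum_congr rfl fun y _ => ?_
      rw [Finset.mul_sum]
      refine Finset.sum_congr rfl fun n _ => ?_
      rw [probN_congr (P := fun s => pos 0 s n = y - x) (Q := fun s => pos x s n = y) ?_]
      · ring
      · intro s
        constructor
        · intro h; rw [pos_eq_add, h]; abel
        · intro h; rw [pos_eq_add] at h; rw [← h]; abel
    rw [hstep0]
    have hA : ∀ x ∈ A \ B,
        esc d (↑(A ∪ B)) x * (∑ y ∈ B, ∑ n ∈ Finset.range M,
            probN d n (fun s => pos x s n = y) * esc d (↑B) y)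
        ≤ esc d (↑(A ∪ B)) x * ∑ n ∈ Finset.range M, ∑ y ∈ B,
            probN d n (fun s => pos y s n = x ∧
              ∀ k, 1 ≤ k → k ≤ n → pos y s k ∉ (↑B : Set (V d))) := by
      intro x _
      refine mul_le_mul_of_nonneg_left ?_ (esc_nonneg _ _)
      exact le_trans (stepA hd B x M N hMN) (stepB hd B x M N hMN)
    refine le_trans (Finset.sum_le_sum hA) ?_
    have h1 : (∑ x ∈ A \ B, esc d (↑(A ∪ B)) x * ∑ n ∈ Finset.range M, ∑ y ∈ B,
          probN d n (fun s => pos y s n = x ∧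
            ∀ k, 1 ≤ k → k ≤ n → pos y s k ∉ (↑B : Set (V d))))
        = ∑ x ∈ A \ B, ∑ n ∈ Finset.range M, ∑ y ∈ B,
          probN d n (fun s => pos y s n = x ∧
            ∀ k, 1 ≤ k → k ≤ n → pos y s k ∉ (↑B : Set (V d))) * esc d (↑(A ∪ B)) x := by
      refine Finset.sum_congr rfl fun x _ => ?_
      rw [Finset.mul_sum]
      refine Finset.sum_congr rfl fun n _ => ?_
      rw [Finset.mul_sum]
      exact Finset.sum_congr rfl fun y _ => mul_comm _ _
    rw [h1, sum_rearrange (A \ B) B (Finset.range M)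
      (fun n x y => probN d n (fun s => pos y s n = x ∧
        ∀ k, 1 ≤ k → k ≤ n → pos y s k ∉ (↑B : Set (V d))) * esc d (↑(A ∪ B)) x)]
    exact Finset.sum_le_sum fun y hy => stepD hd A B y hy M N hMN
  have hten : Tendsto (fun N => ∑ y ∈ B, (escN d (↑B) y N - escN d (↑(A ∪ B)) y N))
      atTop (nhds (∑ y ∈ B, (esc d (↑B) y - esc d (↑(A ∪ B)) y))) :=
    tendsto_finset_sum B fun y _ =>
      ((tendsto_escN hd (↑B) y).sub (tendsto_escN hd (↑(A ∪ B)) y))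
  exact ge_of_tendsto hten (Filter.eventually_atTop.mpr ⟨M, hbound⟩)
end mainM
-- ## Final theorem
section final
open Classical
variable {d : ℕ}

/-- the χ₀ summand, as a function of the pair and the time -/
noncomputable def chiF (d : ℕ) (A B : Finset (V d)) (q : V d × V d) (n : ℕ) : ℝ :=
  esc d (↑(A ∪ B)) q.1 * probN d n (fun s => pos 0 s n = q.2 - q.1) * esc d (↑B) q.2

lemma chiF_nonneg (A B : Finset (V d)) (q : V d × V d) (n : ℕ) : 0 ≤ chiF d A B q n :=
  mul_nonneg (mul_nonneg (esc_nonneg _ _) (probN_nonneg _ _ _)) (esc_nonneg _ _)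

lemma chiF_partial_le (hd0 : 0 < d) (A B : Finset (V d)) (M : ℕ) :
    (∑ p ∈ (A \ B) ×ˢ B, ∑ n ∈ Finset.range M, chiF d A B p n)
      ≤ ∑ y ∈ B, (esc d (↑B) y - esc d (↑(A ∪ B)) y) := by
  calc (∑ p ∈ (A \ B) ×ˢ B, ∑ n ∈ Finset.range M, chiF d A B p n)
      = ∑ x ∈ A \ B, ∑ y ∈ B, ∑ n ∈ Finset.range M, chiF d A B (x, y) n :=
        Finset.sum_product _ _ _
    _ = ∑ x ∈ A \ B, ∑ y ∈ B, ∑ n ∈ Finset.range M,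
          esc d (↑(A ∪ B)) x * probN d n (fun s => pos 0 s n = y - x) * esc d (↑B) y :=
        Finset.sum_congr rfl fun x _ => Finset.sum_congr rfl fun y _ =>
          Finset.sum_congr rfl fun n _ => rfl
    _ ≤ _ := mainM hd0 A B M

theorem cap_union_le_chi0' (hd : 3 ≤ d) (A B : Finset (V d)) :
    cap (A ∪ B) ≤ cap A + cap B -
      ∑ x ∈ A \ B, ∑ y ∈ B, esc d (↑(A ∪ B)) x * G d (y - x) * esc d (↑B) y := by
  have hd0 : 0 < d := by omega
  have hsummable : ∀ p ∈ (A \ B) ×ˢ B, Summable (chiF d A B p) := by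
    intro p hp
    refine summable_of_sum_range_le
      (c := ∑ y ∈ B, (esc d (↑B) y - esc d (↑(A ∪ B)) y)) (chiF_nonneg A B p) ?_
    intro M
    refine le_trans ?_ (chiF_partial_le hd0 A B M)
    exact Finset.single_le_sum (f := fun q => ∑ n ∈ Finset.range M, chiF d A B q n)
      (fun q _ => Finset.sum_nonneg fun n _ => chiF_nonneg A B q n) hp
  have hterm : ∀ q : V d × V d,
      esc d (↑(A ∪ B)) q.1 * G d (q.2 - q.1) * esc d (↑B) q.2 = ∑' n, chiF d A B q n := by
    intro q
    simp only [chiF, G]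
    rw [← tsum_mul_left, ← tsum_mul_right]
  have hchi : (∑ x ∈ A \ B, ∑ y ∈ B,
      esc d (↑(A ∪ B)) x * G d (y - x) * esc d (↑B) y)
      ≤ ∑ y ∈ B, (esc d (↑B) y - esc d (↑(A ∪ B)) y) := by
    calc (∑ x ∈ A \ B, ∑ y ∈ B, esc d (↑(A ∪ B)) x * G d (y - x) * esc d (↑B) y)
        = ∑ p ∈ (A \ B) ×ˢ B, esc d (↑(A ∪ B)) p.1 * G d (p.2 - p.1) * esc d (↑B) p.2 :=
          (Finset.sum_product' _ _ _).symm
      _ = ∑ p ∈ (A \ B) ×ˢ B, ∑' n, chiF d A B p n :=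
          Finset.sum_congr rfl fun p _ => hterm p
      _ = ∑' n, ∑ p ∈ (A \ B) ×ˢ B, chiF d A B p n := (Summable.tsum_finsetSum hsummable).symm
      _ ≤ ∑ y ∈ B, (esc d (↑B) y - esc d (↑(A ∪ B)) y) := by
          refine Summable.tsum_le_of_sum_range_le (summable_sum hsummable) ?_
          intro M
          rw [Finset.sum_comm]
          exact chiF_partial_le hd0 A B M
  have hcapU : cap (A ∪ B) = ∑ x ∈ A, esc d (↑(A ∪ B)) x + ∑ y ∈ B \ A, esc d (↑(A ∪ B)) y := by
    have hind : A ∪ B \ A = A ∪ B := Finset.union_sdiff_self_eq_union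
    have hsu := Finset.sum_union (f := fun z => esc d (↑(A ∪ B)) z)
      (Finset.disjoint_sdiff (s := A) (t := B))
    rw [hind] at hsu
    rw [cap]
    exact hsu
  have hBsub : ∑ y ∈ B \ A, esc d (↑(A ∪ B)) y ≤ ∑ y ∈ B, esc d (↑(A ∪ B)) y :=
    Finset.sum_le_sum_of_subset_of_nonneg Finset.sdiff_subset
      (fun y _ _ => esc_nonneg _ _)
  have hAsub : ∑ x ∈ A, esc d (↑(A ∪ B)) x ≤ cap A := by
    rw [cap]
    refine Finset.sum_le_sum fun x _ => ?_
    exact esc_anti_set hd0 (Finset.coe_subset.mpr Finset.subset_union_left) x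
  have hLsum : ∑ y ∈ B, (esc d (↑B) y - esc d (↑(A ∪ B)) y)
      = cap B - ∑ y ∈ B, esc d (↑(A ∪ B)) y := by
    rw [Finset.sum_sub_distrib, cap]
  linarith [hchi, hcapU, hBsub, hAsub, hLsum]

end final

/-- One-sided decomposition: `Cap(A ∪ B) ≤ Cap(A) + Cap(B) - χ₀(A,B)` where
`χ₀(A,B) = Σ_{x ∈ A \ B} Σ_{y ∈ B} P_x(H_{A∪B}^+ = ∞) G(y-x) P_y(H_B^+ = ∞)`. -/
theorem cap_union_le_chi0 {d : ℕ} (hd : 3 ≤ d) (A B : Finset (V d)) :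
    cap (A ∪ B) ≤ cap A + cap B -
      ∑ x ∈ A \ B, ∑ y ∈ B, esc d (↑(A ∪ B)) x * G d (y - x) * esc d (↑B) y :=
  cap_union_le_chi0' hd A B

end SRW
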